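/- arXiv:0807.4745 — 2 statements merged into one kernel-verified Lean document; each statement's English description precedes it below -/
import Mathlib

section
/- Let A be a nonempty topological space, let m ≥ 2, let D be the closed unit ball in ℝ^{m−1} with boundary sphere S = ∂D, and let CA = (A × [0,1]) / (A × {0}) be the cone on A with cone point p, where A is identified with A × {1} ⊆ CA. Let x be a point of the interior of D. Then the space (CA × D) \ {(p, x)} deformation retracts onto the subspace (CA × S) ∪ (A × D); in particular the two spaces are homotopy equivalent. -/
/-- The setoid on `A × [0,1]` defining the cone: collapse `A × {0}` to a point. -/
def coneSetoid (A : Type) [TopologicalSpace A] : Setoid (A × unitInterval) where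
  r a b := a = b ∨ (a.2 = 0 ∧ b.2 = 0)
  iseqv := by
    refine ⟨fun a => Or.inl rfl, ?_, ?_⟩
    · rintro a b (rfl | ⟨h1, h2⟩)
      · exact Or.inl rfl
      · exact Or.inr ⟨h2, h1⟩
    · rintro a b c (rfl | ⟨h1, h2⟩) (rfl | ⟨h3, h4⟩)
      · exact Or.inl rfl
      · exact Or.inr ⟨h3, h4⟩
      · exact Or.inr ⟨h1, h2⟩
      · exact Or.inr ⟨h1, h4⟩

/-- The cone `CA = (A × [0,1]) / (A × {0})`, with the quotient topology. -/
def Cone (A : Type) [TopologicalSpace A] : Type := Quotient (coneSetoid A)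

instance (A : Type) [TopologicalSpace A] : TopologicalSpace (Cone A) :=
  instTopologicalSpaceQuotient

/-- The cone point `p` of `CA` (the image of `A × {0}`). -/
noncomputable def conePoint (A : Type) [TopologicalSpace A] [Nonempty A] : Cone A :=
  Quotient.mk (coneSetoid A) (Classical.arbitrary A, 0)

/-- The base `A ⊆ CA`, i.e. the image of `A × {1}` in the cone. -/
def coneBase (A : Type) [TopologicalSpace A] : Set (Cone A) :=
  {c | ∃ a : A, c = Quotient.mk (coneSetoid A) (a, 1)}

/-- `Z ⊆ Y` is a deformation retract of `Y`: there is a homotopy from the identity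
map of `Y` to a retraction of `Y` onto `Z`. -/
def IsDeformationRetract (Y : Type) [TopologicalSpace Y] (Z : Set Y) : Prop :=
  ∃ H : C(Y × unitInterval, Y),
    (∀ y : Y, H (y, 0) = y) ∧ (∀ y : Y, H (y, 1) ∈ Z) ∧ (∀ z ∈ Z, H (z, 1) = z)

/-- The closed unit ball `D` in `ℝ^d`. -/
def unitBall (d : ℕ) : Set (EuclideanSpace ℝ (Fin d)) := Metric.closedBall 0 1

/-- The subspace `(CA × S) ∪ (A × D)` of `CA × D`, where `S = ∂D`. -/
def coneSphereUnion (A : Type) [TopologicalSpace A] (d : ℕ) :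
    Set (Cone A × ↥(unitBall d)) :=
  {w | (w.2 : EuclideanSpace ℝ (Fin d)) ∈ Metric.sphere (0 : EuclideanSpace ℝ (Fin d)) 1
        ∨ w.1 ∈ coneBase A}

section Aux

open Set Metric

variable {A : Type} [TopologicalSpace A]

/-- The `t`-coordinate on the cone. -/
noncomputable def coneT : Cone A → ℝ :=
  Quotient.lift (fun p : A × unitInterval => (p.2 : ℝ)) (by
    rintro ⟨a, t⟩ ⟨b, u⟩ (h | ⟨h1, h2⟩)
    · rw [h]
    · simp only at h1 h2
      rw [h1, h2])

@[simp] lemma coneT_mk (a : A) (t : unitInterval) :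
    coneT (Quotient.mk (coneSetoid A) (a, t)) = (t : ℝ) := rfl

lemma continuous_coneT : Continuous (coneT : Cone A → ℝ) :=
  Continuous.quotient_lift (by continuity) _

lemma coneT_nonneg (c : Cone A) : 0 ≤ coneT c := by
  induction c using Quotient.ind with
  | _ p => exact p.2.2.1

lemma coneT_le_one (c : Cone A) : coneT c ≤ 1 := by
  induction c using Quotient.ind with
  | _ p => exact p.2.2.2

lemma coneT_eq_zero_iff [Nonempty A] (c : Cone A) : coneT c = 0 ↔ c = conePoint A := by
  constructor
  · intro h
    induction c using Quotient.ind with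
    | _ p =>
      exact Quotient.sound (Or.inr ⟨Subtype.ext h, rfl⟩)
  · rintro rfl; rfl

/-- Scaling map on the cone: `([a,t], u) ↦ [a, clamp (u t)]`. -/
noncomputable def coneScale : Cone A → C(ℝ, Cone A) :=
  Quotient.lift
    (fun p => ContinuousMap.curry
      (ContinuousMap.mk
        (fun q : (A × unitInterval) × ℝ =>
          Quotient.mk (coneSetoid A) (q.1.1, Set.projIcc 0 1 zero_le_one (q.2 * (q.1.2 : ℝ))))
        (by
          apply Continuous.comp continuous_quot_mk
          exact ((continuous_fst.fst).prodMk
            ((continuous_projIcc).comp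
              (continuous_snd.mul (continuous_subtype_val.comp continuous_fst.snd)))))) p)
    (by
      rintro ⟨a, t⟩ ⟨b, u⟩ (h | ⟨h1, h2⟩)
      · rw [h]
      · simp only at h1 h2
        ext v
        simp only [ContinuousMap.curry_apply, ContinuousMap.coe_mk, h1, h2]
        exact Quotient.sound (Or.inr ⟨by simp [Set.projIcc], by simp [Set.projIcc]⟩))

lemma coneScale_mk (a : A) (t : unitInterval) (u : ℝ) :
    coneScale (Quotient.mk (coneSetoid A) (a, t)) u
      = Quotient.mk (coneSetoid A) (a, Set.projIcc 0 1 zero_le_one (u * (t : ℝ))) := rfl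

lemma continuous_coneScale :
    Continuous (fun q : Cone A × ℝ => coneScale q.1 q.2) := by
  have h1 : Continuous (coneScale : Cone A → C(ℝ, Cone A)) :=
    Continuous.quotient_lift (ContinuousMap.continuous _) _
  exact (h1.comp continuous_fst).eval continuous_snd

lemma coneT_coneScale (c : Cone A) (u : ℝ) :
    coneT (coneScale c u) = max 0 (min 1 (u * coneT c)) := by
  induction c using Quotient.ind with
  | _ p => rfl

lemma coneScale_one (c : Cone A) : coneScale c 1 = c := by
  induction c using Quotient.ind with
  | _ p =>
    obtain ⟨a, t⟩ := p
    rw [coneScale_mk, one_mul, Set.projIcc_of_mem zero_le_one t.2]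

end Aux


section G

open Set Metric Real
open scoped RealInnerProductSpace

variable {E : Type*} [NormedAddCommGroup E] [InnerProductSpace ℝ E]

/-- `gfun x y` is the reciprocal of the scaling factor `μ ≥ 0` such that
`x + μ (y - x)` lies on the unit sphere. -/
noncomputable def gfun (x y : E) : ℝ :=
  (⟪x, y - x⟫ + Real.sqrt (⟪x, y - x⟫ ^ 2 + ‖y - x‖ ^ 2 * (1 - ‖x‖ ^ 2))) / (1 - ‖x‖ ^ 2)

lemma continuous_gfun (x : E) : Continuous (gfun x) := by
  apply Continuous.div_const
  apply Continuous.add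
  · exact (continuous_const.inner (continuous_id.sub continuous_const))
  · apply Real.continuous_sqrt.comp
    apply Continuous.add
    · exact ((continuous_const.inner (continuous_id.sub continuous_const)).pow 2)
    · exact (((continuous_id.sub continuous_const).norm.pow 2).mul continuous_const)

variable {x y : E} (hx : ‖x‖ < 1)

private lemma gaux (hx : ‖x‖ < 1) :
    0 < 1 - ‖x‖ ^ 2 ∧
    Real.sqrt (⟪x, y - x⟫ ^ 2 + ‖y - x‖ ^ 2 * (1 - ‖x‖ ^ 2)) ^ 2
      = ⟪x, y - x⟫ ^ 2 + ‖y - x‖ ^ 2 * (1 - ‖x‖ ^ 2) ∧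
    |⟪x, y - x⟫| ≤ Real.sqrt (⟪x, y - x⟫ ^ 2 + ‖y - x‖ ^ 2 * (1 - ‖x‖ ^ 2)) := by
  have hα : 0 < 1 - ‖x‖ ^ 2 := by nlinarith [norm_nonneg x]
  have harg : 0 ≤ ⟪x, y - x⟫ ^ 2 + ‖y - x‖ ^ 2 * (1 - ‖x‖ ^ 2) := by positivity
  refine ⟨hα, Real.sq_sqrt harg, ?_⟩
  rw [← Real.sqrt_sq_eq_abs]
  apply Real.sqrt_le_sqrt
  nlinarith [sq_nonneg ‖y - x‖]

lemma gfun_nonneg (hx : ‖x‖ < 1) : 0 ≤ gfun x y := by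
  obtain ⟨hα, hs2, hsb⟩ := gaux (y := y) hx
  have := abs_le.mp hsb
  exact div_nonneg (by linarith [this.1]) hα.le

/-- Norm expansion. -/
private lemma norm_expand (k : ℝ) :
    ‖x + k • (y - x)‖ ^ 2 = ‖x‖ ^ 2 + 2 * k * ⟪x, y - x⟫ + k ^ 2 * ‖y - x‖ ^ 2 := by
  rw [norm_add_sq_real, real_inner_smul_right, norm_smul, mul_pow]
  simp [Real.norm_eq_abs, sq_abs]
  ring

/-- Main identity relating the quadratic to the factored form. -/
private lemma key_identity (k : ℝ) (hx : ‖x‖ < 1) :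
    (1 - ‖x‖ ^ 2) * (‖x + k • (y - x)‖ ^ 2 - 1)
      = (k * (Real.sqrt (⟪x, y - x⟫ ^ 2 + ‖y - x‖ ^ 2 * (1 - ‖x‖ ^ 2)) + ⟪x, y - x⟫)
            - (1 - ‖x‖ ^ 2))
        * (k * (Real.sqrt (⟪x, y - x⟫ ^ 2 + ‖y - x‖ ^ 2 * (1 - ‖x‖ ^ 2)) - ⟪x, y - x⟫)
            + (1 - ‖x‖ ^ 2)) := by
  obtain ⟨hα, hs2, hsb⟩ := gaux (y := y) hx
  rw [norm_expand]
  nlinarith [hs2]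

lemma gfun_mul_le_iff (hx : ‖x‖ < 1) {k : ℝ} (hk : 0 ≤ k) :
    ‖x + k • (y - x)‖ ≤ 1 ↔ k * gfun x y ≤ 1 := by
  obtain ⟨hα, hs2, hsb⟩ := gaux (y := y) hx
  set b := ⟪x, y - x⟫ with hb
  set s := Real.sqrt (b ^ 2 + ‖y - x‖ ^ 2 * (1 - ‖x‖ ^ 2)) with hsdef
  have hkey := key_identity (x := x) (y := y) k hx
  have habs := abs_le.mp hsb
  have hfac2 : 0 < k * (s - b) + (1 - ‖x‖ ^ 2) := by nlinarith [habs.2]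
  have hglt : k * gfun x y ≤ 1 ↔ k * (s + b) ≤ (1 - ‖x‖ ^ 2) := by
    rw [gfun, ← hb, ← hsdef, ← mul_div_assoc, div_le_one hα]
    constructor <;> intro h <;> linarith
  rw [hglt]
  constructor
  · intro h
    have h2 : ‖x + k • (y - x)‖ ^ 2 - 1 ≤ 0 := by nlinarith [norm_nonneg (x + k • (y - x))]
    nlinarith
  · intro h
    have h2 : ‖x + k • (y - x)‖ ^ 2 ≤ 1 := by nlinarith
    nlinarith [norm_nonneg (x + k • (y - x))]

lemma norm_eq_one_of_gfun (hx : ‖x‖ < 1) {k : ℝ} (hk : 0 ≤ k) (h : k * gfun x y = 1) :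
    ‖x + k • (y - x)‖ = 1 := by
  obtain ⟨hα, hs2, hsb⟩ := gaux (y := y) hx
  set b := ⟪x, y - x⟫ with hb
  set s := Real.sqrt (b ^ 2 + ‖y - x‖ ^ 2 * (1 - ‖x‖ ^ 2)) with hsdef
  have hkey := key_identity (x := x) (y := y) k hx
  have heq : k * (s + b) = 1 - ‖x‖ ^ 2 := by
    have : k * ((b + s) / (1 - ‖x‖ ^ 2)) = 1 := h
    field_simp at this
    linarith
  have h2 : ‖x + k • (y - x)‖ ^ 2 = 1 := by
    have : (1 - ‖x‖ ^ 2) * (‖x + k • (y - x)‖ ^ 2 - 1) = 0 := by rw [hkey, heq]; ring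
    have := mul_eq_zero.mp this
    rcases this with h' | h'
    · linarith
    · linarith
  nlinarith [norm_nonneg (x + k • (y - x))]

lemma gfun_le_one (hx : ‖x‖ < 1) (hy : ‖y‖ ≤ 1) : gfun x y ≤ 1 := by
  have h := (gfun_mul_le_iff (y := y) hx zero_le_one).mp
    (by rw [one_smul, add_sub_cancel]; exact hy)
  simpa using h

lemma gfun_eq_one (hx : ‖x‖ < 1) (hy : ‖y‖ = 1) : gfun x y = 1 := by
  obtain ⟨hα, hs2, hsb⟩ := gaux (y := y) hx
  set b := ⟪x, y - x⟫ with hb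
  set s := Real.sqrt (b ^ 2 + ‖y - x‖ ^ 2 * (1 - ‖x‖ ^ 2)) with hsdef
  have hkey := key_identity (x := x) (y := y) 1 hx
  have h1 : ‖x + (1:ℝ) • (y - x)‖ = 1 := by simpa using hy
  have habs := abs_le.mp hsb
  have hfac2 : 0 < 1 * (s - b) + (1 - ‖x‖ ^ 2) := by nlinarith [habs.2]
  have heq : 1 * (s + b) - (1 - ‖x‖ ^ 2) = 0 := by
    rcases mul_eq_zero.mp (by rw [← hkey, h1]; ring : _ * _ = (0:ℝ)) with h' | h'
    · exact h'
    · linarith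
  rw [gfun, ← hb, ← hsdef]
  rw [div_eq_one_iff_eq hα.ne']
  linarith

lemma gfun_pos (hx : ‖x‖ < 1) (hy : y ≠ x) : 0 < gfun x y := by
  obtain ⟨hα, hs2, hsb⟩ := gaux (y := y) hx
  set b := ⟪x, y - x⟫ with hb
  set s := Real.sqrt (b ^ 2 + ‖y - x‖ ^ 2 * (1 - ‖x‖ ^ 2)) with hsdef
  have hc2 : 0 < ‖y - x‖ ^ 2 := by
    exact pow_pos (norm_pos_iff.mpr (sub_ne_zero.mpr hy)) 2
  have hs : |b| < s := by
    rw [← Real.sqrt_sq_eq_abs, hsdef]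
    apply Real.sqrt_lt_sqrt (sq_nonneg b)
    nlinarith
  have := abs_le.mp hs.le
  apply div_pos _ hα
  cases abs_lt.mp hs with
  | intro h1 h2 => linarith

lemma gfun_eq_zero_self (x : E) : gfun x x = 0 := by
  simp [gfun]

end G

section Main

open Set Metric
open scoped RealInnerProductSpace

variable (A : Type) [TopologicalSpace A] [Nonempty A] {d : ℕ}
  (x : EuclideanSpace ℝ (Fin d))

/-- The "inverse scaling" function `ν = max t (g y)`. -/
noncomputable def nuFun (w : Cone A × ↥(unitBall d)) : ℝ :=
  max (coneT w.1) (gfun x (w.2 : EuclideanSpace ℝ (Fin d)))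

lemma nuFun_nonneg (w : Cone A × ↥(unitBall d)) : 0 ≤ nuFun A x w :=
  le_trans (coneT_nonneg w.1) (le_max_left _ _)

lemma mem_unitBall_norm {w : ↥(unitBall d)} : ‖(w : EuclideanSpace ℝ (Fin d))‖ ≤ 1 :=
  mem_closedBall_zero_iff.mp w.2

lemma nuFun_le_one (hx : ‖x‖ < 1) (w : Cone A × ↥(unitBall d)) : nuFun A x w ≤ 1 :=
  max_le (coneT_le_one w.1) (gfun_le_one hx (mem_unitBall_norm))

lemma nuFun_pos (hx : ‖x‖ < 1) (hxm : x ∈ unitBall d)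
    {w : Cone A × ↥(unitBall d)} (hw : w ≠ (conePoint A, ⟨x, hxm⟩)) :
    0 < nuFun A x w := by
  rcases lt_or_ge 0 (nuFun A x w) with h | h
  · exact h
  · exfalso
    have ht : coneT w.1 = 0 :=
      le_antisymm (le_trans (le_max_left _ _) h) (coneT_nonneg w.1)
    have hy : (w.2 : EuclideanSpace ℝ (Fin d)) = x := by
      by_contra hne
      have := gfun_pos hx hne
      have := le_trans (le_max_right (coneT w.1) _) h
      linarith
    exact hw (Prod.ext ((coneT_eq_zero_iff _).mp ht) (Subtype.ext hy))

/-- The interpolated scaling factor. -/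
noncomputable def kFun (p : (Cone A × ↥(unitBall d)) × unitInterval) : ℝ :=
  ((1 - (p.2 : ℝ)) + (p.2 : ℝ) * nuFun A x p.1)⁻¹

lemma denom_nonneg (p : (Cone A × ↥(unitBall d)) × unitInterval) :
    0 ≤ (1 - (p.2 : ℝ)) + (p.2 : ℝ) * nuFun A x p.1 := by
  have h1 := p.2.2.1
  have h2 := p.2.2.2
  have := nuFun_nonneg A x p.1
  have : 0 ≤ (p.2 : ℝ) * nuFun A x p.1 := mul_nonneg h1 this
  linarith

lemma nu_le_denom (hx : ‖x‖ < 1) (p : (Cone A × ↥(unitBall d)) × unitInterval) :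
    nuFun A x p.1 ≤ (1 - (p.2 : ℝ)) + (p.2 : ℝ) * nuFun A x p.1 := by
  have h1 := p.2.2.1
  have h2 := p.2.2.2
  have hle := nuFun_le_one A x hx p.1
  nlinarith

lemma denom_le_one (hx : ‖x‖ < 1) (p : (Cone A × ↥(unitBall d)) × unitInterval) :
    (1 - (p.2 : ℝ)) + (p.2 : ℝ) * nuFun A x p.1 ≤ 1 := by
  have h1 := p.2.2.1
  have hle := nuFun_le_one A x hx p.1
  nlinarith

lemma kFun_nonneg (p : (Cone A × ↥(unitBall d)) × unitInterval) : 0 ≤ kFun A x p :=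
  inv_nonneg.mpr (denom_nonneg A x p)

lemma kFun_mul_g_le (hx : ‖x‖ < 1) (p : (Cone A × ↥(unitBall d)) × unitInterval) :
    kFun A x p * gfun x (p.1.2 : EuclideanSpace ℝ (Fin d)) ≤ 1 := by
  rcases eq_or_lt_of_le (denom_nonneg A x p) with h | h
  · rw [kFun, ← h, inv_zero, zero_mul]; exact zero_le_one
  · rw [kFun, inv_mul_le_iff₀ h, mul_one]
    exact le_trans (le_max_right (coneT p.1.1) _) (nu_le_denom A x hx p)

lemma kFun_mul_t_le (hx : ‖x‖ < 1) (p : (Cone A × ↥(unitBall d)) × unitInterval) :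
    kFun A x p * coneT p.1.1 ≤ 1 := by
  rcases eq_or_lt_of_le (denom_nonneg A x p) with h | h
  · rw [kFun, ← h, inv_zero, zero_mul]; exact zero_le_one
  · rw [kFun, inv_mul_le_iff₀ h, mul_one]
    exact le_trans (le_max_left _ (gfun x (p.1.2 : EuclideanSpace ℝ (Fin d))))
      (nu_le_denom A x hx p)

/-- The homotopy, as a raw function on `(CA × D) × I`. -/
noncomputable def Hfun (hx : ‖x‖ < 1) (p : (Cone A × ↥(unitBall d)) × unitInterval) :
    Cone A × ↥(unitBall d) :=
  (coneScale p.1.1 (kFun A x p),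
   ⟨x + kFun A x p • ((p.1.2 : EuclideanSpace ℝ (Fin d)) - x), by
      exact mem_closedBall_zero_iff.mpr
        ((gfun_mul_le_iff hx (kFun_nonneg A x p)).mpr (kFun_mul_g_le A x hx p))⟩)

lemma kFun_pos (hx : ‖x‖ < 1) (hxm : x ∈ unitBall d)
    {p : (Cone A × ↥(unitBall d)) × unitInterval}
    (hp : p.1 ≠ (conePoint A, ⟨x, hxm⟩)) : 0 < kFun A x p := by
  apply inv_pos.mpr
  exact lt_of_lt_of_le (nuFun_pos A x hx hxm hp) (nu_le_denom A x hx p)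

lemma Hfun_ne (hx : ‖x‖ < 1) (hxm : x ∈ unitBall d)
    {p : (Cone A × ↥(unitBall d)) × unitInterval}
    (hp : p.1 ≠ (conePoint A, ⟨x, hxm⟩)) :
    Hfun A x hx p ≠ (conePoint A, ⟨x, hxm⟩) := by
  intro h
  have hk := kFun_pos A x hx hxm hp
  apply hp
  have h1 := congrArg Prod.fst h
  have h2 := congrArg Prod.snd h
  simp only [Hfun] at h1 h2
  -- second component : y = x
  have hy : (p.1.2 : EuclideanSpace ℝ (Fin d)) = x := by
    have := congrArg Subtype.val h2
    simp only at this
    have hz : kFun A x p • ((p.1.2 : EuclideanSpace ℝ (Fin d)) - x) = 0 := by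
      have : x + kFun A x p • ((p.1.2 : EuclideanSpace ℝ (Fin d)) - x) = x := this
      linear_combination (norm := module) this
    rcases smul_eq_zero.mp hz with h' | h'
    · exact absurd h' hk.ne'
    · exact sub_eq_zero.mp h'
  -- first component : coneT p.1.1 = 0
  have ht : coneT p.1.1 = 0 := by
    have := congrArg coneT h1
    rw [coneT_coneScale] at this
    have hp0 : coneT (conePoint A) = 0 := rfl
    rw [hp0] at this
    have htn := coneT_nonneg p.1.1
    have hmin : min 1 (kFun A x p * coneT p.1.1) ≤ 0 := by
      by_contra hc
      push_neg at hc
      rw [max_eq_right hc.le] at this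
      linarith
    have hkt : kFun A x p * coneT p.1.1 ≤ 0 := by
      rcases le_total 1 (kFun A x p * coneT p.1.1) with h' | h'
      · rw [min_eq_left h'] at hmin; linarith
      · rwa [min_eq_right h'] at hmin
    nlinarith
  exact Prod.ext ((coneT_eq_zero_iff _).mp ht) (Subtype.ext hy)

lemma Hfun_of_k_one (hx : ‖x‖ < 1) {p : (Cone A × ↥(unitBall d)) × unitInterval}
    (hk : kFun A x p = 1) : Hfun A x hx p = p.1 := by
  apply Prod.ext
  · rw [Hfun]; simp only [hk]
    exact coneScale_one p.1.1
  · apply Subtype.ext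
    simp only [Hfun, hk, one_smul]
    exact add_sub_cancel x _

lemma kFun_at_zero (w : Cone A × ↥(unitBall d)) : kFun A x (w, 0) = 1 := by
  simp [kFun]

lemma kFun_at_one (w : Cone A × ↥(unitBall d)) : kFun A x (w, 1) = (nuFun A x w)⁻¹ := by
  simp [kFun]

lemma continuous_Hfun (hx : ‖x‖ < 1) (hxm : x ∈ unitBall d) :
    Continuous (fun q : ↥{w : Cone A × ↥(unitBall d) | w ≠ (conePoint A, ⟨x, hxm⟩)} × unitInterval
      => Hfun A x hx ((q.1 : Cone A × ↥(unitBall d)), q.2)) := by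
  have hnu : Continuous (fun q :
      ↥{w : Cone A × ↥(unitBall d) | w ≠ (conePoint A, ⟨x, hxm⟩)} × unitInterval =>
      nuFun A x (q.1 : Cone A × ↥(unitBall d))) := by
    apply Continuous.max
    · exact continuous_coneT.comp (continuous_fst.comp (continuous_subtype_val.comp continuous_fst))
    · exact (continuous_gfun x).comp (continuous_subtype_val.comp
        (continuous_snd.comp (continuous_subtype_val.comp continuous_fst)))
  have hden : Continuous (fun q :
      ↥{w : Cone A × ↥(unitBall d) | w ≠ (conePoint A, ⟨x, hxm⟩)} × unitInterval =>
      (1 - (q.2 : ℝ)) + (q.2 : ℝ) * nuFun A x (q.1 : Cone A × ↥(unitBall d))) := by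
    have hs : Continuous (fun q :
        ↥{w : Cone A × ↥(unitBall d) | w ≠ (conePoint A, ⟨x, hxm⟩)} × unitInterval =>
        (q.2 : ℝ)) := continuous_subtype_val.comp continuous_snd
    exact ((continuous_const.sub hs).add (hs.mul hnu))
  have hk : Continuous (fun q :
      ↥{w : Cone A × ↥(unitBall d) | w ≠ (conePoint A, ⟨x, hxm⟩)} × unitInterval =>
      kFun A x ((q.1 : Cone A × ↥(unitBall d)), q.2)) := by
    apply hden.inv₀
    intro q
    have := lt_of_lt_of_le (nuFun_pos A x hx hxm q.1.2) (nu_le_denom A x hx ((q.1 : _), q.2))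
    exact this.ne'
  apply Continuous.prodMk
  · exact continuous_coneScale.comp
      ((continuous_fst.comp (continuous_subtype_val.comp continuous_fst)).prodMk hk)
  · apply Continuous.subtype_mk
    exact continuous_const.add (hk.smul ((continuous_subtype_val.comp
      (continuous_snd.comp (continuous_subtype_val.comp continuous_fst))).sub continuous_const))

end Main

section Final

open Set Metric

variable (A : Type) [TopologicalSpace A] [Nonempty A] {d : ℕ}
  (x : EuclideanSpace ℝ (Fin d))

lemma Hfun_zero (hx : ‖x‖ < 1) (w : Cone A × ↥(unitBall d)) :
    Hfun A x hx (w, 0) = w :=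
  Hfun_of_k_one A x hx (kFun_at_zero A x w)

lemma Hfun_one_mem (hx : ‖x‖ < 1) (hxm : x ∈ unitBall d)
    {w : Cone A × ↥(unitBall d)} (hw : w ≠ (conePoint A, ⟨x, hxm⟩)) :
    Hfun A x hx (w, 1) ∈ coneSphereUnion A d := by
  have hnu := nuFun_pos A x hx hxm hw
  have hk : kFun A x (w, 1) = (nuFun A x w)⁻¹ := kFun_at_one A x w
  rcases le_total (gfun x (w.2 : EuclideanSpace ℝ (Fin d))) (coneT w.1) with hge | hle
  · -- ν = coneT w.1 > 0 : the cone part lands in the base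
    have hnut : nuFun A x w = coneT w.1 := max_eq_left hge
    have ht : 0 < coneT w.1 := hnut ▸ hnu
    refine Or.inr ?_
    obtain ⟨⟨a, t'⟩, hrep⟩ := Quotient.exists_rep w.1
    refine ⟨a, ?_⟩
    show coneScale w.1 (kFun A x (w, 1)) = _
    rw [hk, hnut, ← hrep, coneScale_mk]
    have ht' : (t' : ℝ) ≠ 0 := by
      rw [← hrep] at ht
      exact (coneT_mk a t' ▸ ht).ne'
    have hT : coneT (Quotient.mk (coneSetoid A) (a, t')) = (t' : ℝ) := coneT_mk a t'
    rw [hT, inv_mul_cancel₀ ht']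
    congr 1
    ext
    · rfl
    · show (Set.projIcc (0:ℝ) 1 zero_le_one 1 : ℝ) = ((1 : unitInterval) : ℝ)
      rw [Set.projIcc_right]
      rfl
  · -- ν = gfun > 0 : the ball part lands on the sphere
    have hnug : nuFun A x w = gfun x (w.2 : EuclideanSpace ℝ (Fin d)) := max_eq_right hle
    have hg : 0 < gfun x (w.2 : EuclideanSpace ℝ (Fin d)) := hnug ▸ hnu
    refine Or.inl ?_
    show ((Hfun A x hx (w, 1)).2 : EuclideanSpace ℝ (Fin d)) ∈ _
    have hval : ((Hfun A x hx (w, 1)).2 : EuclideanSpace ℝ (Fin d))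
        = x + kFun A x (w, 1) • ((w.2 : EuclideanSpace ℝ (Fin d)) - x) := rfl
    rw [mem_sphere_zero_iff_norm, hval, hk, hnug]
    exact norm_eq_one_of_gfun hx (inv_nonneg.mpr hg.le) (inv_mul_cancel₀ hg.ne')

lemma Hfun_one_fix (hx : ‖x‖ < 1) {w : Cone A × ↥(unitBall d)}
    (hw : w ∈ coneSphereUnion A d) : Hfun A x hx (w, 1) = w := by
  apply Hfun_of_k_one
  rw [kFun_at_one]
  have hone : nuFun A x w = 1 := by
    rcases hw with h | h
    · have hg : gfun x (w.2 : EuclideanSpace ℝ (Fin d)) = 1 :=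
        gfun_eq_one hx (mem_sphere_zero_iff_norm.mp h)
      rw [nuFun, hg]
      exact max_eq_right (coneT_le_one w.1)
    · obtain ⟨a, ha⟩ := h
      have ht : coneT w.1 = 1 := by rw [ha]; rfl
      rw [nuFun, ht]
      exact max_eq_left (gfun_le_one hx mem_unitBall_norm)
  rw [hone, inv_one]

/-- A deformation retract gives a homotopy equivalence with the subspace. -/
theorem isDeformationRetract_homotopyEquiv {Y : Type} [TopologicalSpace Y] {Z : Set Y}
    (h : IsDeformationRetract Y Z) :
    Nonempty (ContinuousMap.HomotopyEquiv Y ↥Z) := by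
  obtain ⟨H, h0, h1, hfix⟩ := h
  have hr : Continuous fun y : Y => (⟨H (y, 1), h1 y⟩ : ↥Z) :=
    (H.continuous.comp (continuous_id.prodMk continuous_const)).subtype_mk _
  refine ⟨⟨⟨fun y => ⟨H (y, 1), h1 y⟩, hr⟩, ⟨Subtype.val, continuous_subtype_val⟩, ?_, ?_⟩⟩
  · have hty : ContinuousMap.Homotopy (ContinuousMap.id Y)
        ((⟨Subtype.val, continuous_subtype_val⟩ : C(↥Z, Y)).comp
          ⟨fun y => ⟨H (y, 1), h1 y⟩, hr⟩) :=
      { toContinuousMap := ⟨fun p => H (p.2, p.1),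
          H.continuous.comp (continuous_snd.prodMk continuous_fst)⟩
        map_zero_left := h0
        map_one_left := fun y => rfl }
    exact ⟨hty.symm⟩
  · have heq : ((⟨fun y => ⟨H (y, 1), h1 y⟩, hr⟩ : C(Y, ↥Z)).comp
        (⟨Subtype.val, continuous_subtype_val⟩ : C(↥Z, Y))) = ContinuousMap.id ↥Z :=
      ContinuousMap.ext fun z => Subtype.ext (hfix z z.2)
    rw [heq]

end Final

/-- For `A` nonempty, `m ≥ 2`, `D ⊆ ℝ^{m-1}` the closed unit ball with
boundary sphere `S`, and `x` an interior point of `D`, the space `(CA × D) \ {(p, x)}`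
deformation retracts onto `(CA × S) ∪ (A × D)`; in particular the two spaces are
homotopy equivalent. -/
theorem punctured_cone_times_ball_deformation_retracts
    (A : Type) [TopologicalSpace A] [Nonempty A] (m : ℕ) (hm : 2 ≤ m)
    (x : EuclideanSpace ℝ (Fin (m - 1))) (hx : x ∈ interior (unitBall (m - 1))) :
    IsDeformationRetract
      (↥{w : Cone A × ↥(unitBall (m - 1)) |
          w ≠ (conePoint A, ⟨x, interior_subset hx⟩)})
      {w : ↥{w : Cone A × ↥(unitBall (m - 1)) |
          w ≠ (conePoint A, ⟨x, interior_subset hx⟩)} |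
        (w : Cone A × ↥(unitBall (m - 1))) ∈ coneSphereUnion A (m - 1)} ∧
    Nonempty
      (ContinuousMap.HomotopyEquiv
        (↥{w : Cone A × ↥(unitBall (m - 1)) |
            w ≠ (conePoint A, ⟨x, interior_subset hx⟩)})
        (↥{w : ↥{w : Cone A × ↥(unitBall (m - 1)) |
            w ≠ (conePoint A, ⟨x, interior_subset hx⟩)} |
          (w : Cone A × ↥(unitBall (m - 1))) ∈ coneSphereUnion A (m - 1)})) := by
  have hxlt : ‖x‖ < 1 := by
    have h1 := interior_closedBall (0 : EuclideanSpace ℝ (Fin (m - 1))) (one_ne_zero (α := ℝ))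
    have h2 : x ∈ Metric.ball (0 : EuclideanSpace ℝ (Fin (m - 1))) 1 := by
      rw [← h1]; exact hx
    exact mem_ball_zero_iff.mp h2
  have hdr : IsDeformationRetract
      (↥{w : Cone A × ↥(unitBall (m - 1)) |
          w ≠ (conePoint A, ⟨x, interior_subset hx⟩)})
      {w : ↥{w : Cone A × ↥(unitBall (m - 1)) |
          w ≠ (conePoint A, ⟨x, interior_subset hx⟩)} |
        (w : Cone A × ↥(unitBall (m - 1))) ∈ coneSphereUnion A (m - 1)} := by
    refine ⟨ContinuousMap.mk
      (fun q => ⟨Hfun A x hxlt ((q.1 : Cone A × ↥(unitBall (m - 1))), q.2),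
        Hfun_ne A x hxlt (interior_subset hx) q.1.2⟩)
      ((continuous_Hfun A x hxlt (interior_subset hx)).subtype_mk _), ?_, ?_, ?_⟩
    · intro y
      exact Subtype.ext (Hfun_zero A x hxlt (y : Cone A × ↥(unitBall (m - 1))))
    · intro y
      exact Hfun_one_mem A x hxlt (interior_subset hx) y.2
    · intro z hz
      exact Subtype.ext (Hfun_one_fix A x hxlt hz)
  exact ⟨hdr, isDeformationRetract_homotopyEquiv hdr⟩
end

section
/- Let Γ be a group and let m, n ≥ 1 be integers. Let φ₋ : ℤ^m → Γ × ℤ^m be the homomorphism a ↦ (1, a), and let φ₊ : ℤ^m → ℤ^m × ℤ^n be the homomorphism a ↦ (a, 1). Then the amalgamated free product (Γ × ℤ^m) ∗_{ℤ^m} (ℤ^m × ℤ^n) — that is, the pushout in the category of groups of φ₋ and φ₊ — is isomorphic to ℤ^m × (Γ ∗ ℤ^n), where Γ ∗ ℤ^n denotes the free product of Γ and ℤ^n. -/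
/-- The free abelian group `ℤ^m` of rank `m`, written multiplicatively. -/
abbrev FreeAb (m : ℕ) : Type := Multiplicative (Fin m → ℤ)

/-- The two vertex groups of the amalgam: `Γ × ℤ^m` and `ℤ^m × ℤ^n`. -/
def amalgamFactor (Γ : Type) [Group Γ] (m n : ℕ) : Bool → Type
  | true => Γ × FreeAb m
  | false => FreeAb m × FreeAb n

instance (Γ : Type) [Group Γ] (m n : ℕ) : ∀ b, Group (amalgamFactor Γ m n b) := by
  rintro (_ | _) <;> dsimp [amalgamFactor] <;> infer_instance

/-- The amalgamating maps `φ₋ : ℤ^m → Γ × ℤ^m`, `a ↦ (1, a)`, and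
`φ₊ : ℤ^m → ℤ^m × ℤ^n`, `a ↦ (a, 1)`. -/
def amalgamMap (Γ : Type) [Group Γ] (m n : ℕ) :
    ∀ b, FreeAb m →* amalgamFactor Γ m n b
  | true => MonoidHom.inr Γ (FreeAb m)
  | false => MonoidHom.inl (FreeAb m) (FreeAb n)

namespace AmalgamAux

variable (Γ : Type) [Group Γ] (m n : ℕ)

/-- Components of the forward map. -/
def fwdF : ∀ b, amalgamFactor Γ m n b →* FreeAb m × Monoid.Coprod Γ (FreeAb n)
  | true => (MonoidHom.snd Γ (FreeAb m)).prod
      (Monoid.Coprod.inl.comp (MonoidHom.fst Γ (FreeAb m)))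
  | false => (MonoidHom.fst (FreeAb m) (FreeAb n)).prod
      (Monoid.Coprod.inr.comp (MonoidHom.snd (FreeAb m) (FreeAb n)))

/-- The map `ℤ^m → ℤ^m × (Γ ∗ ℤ^n)`. -/
def fwdK : FreeAb m →* FreeAb m × Monoid.Coprod Γ (FreeAb n) :=
  MonoidHom.inl _ _

lemma fwd_compat : ∀ b, (fwdF Γ m n b).comp (amalgamMap Γ m n b) = fwdK Γ m n := by
  rintro (_ | _) <;> refine MonoidHom.ext fun a => ?_
  · show ((a : FreeAb m), Monoid.Coprod.inr (1 : FreeAb n)) = ((a : FreeAb m), 1)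
    rw [map_one]
  · show ((a : FreeAb m), Monoid.Coprod.inl (1 : Γ)) = ((a : FreeAb m), 1)
    rw [map_one]

/-- The forward map out of the pushout. -/
def fwd : Monoid.PushoutI (amalgamMap Γ m n) →* FreeAb m × Monoid.Coprod Γ (FreeAb n) :=
  Monoid.PushoutI.lift (fwdF Γ m n) (fwdK Γ m n) (fwd_compat Γ m n)

/-- The map `Γ ∗ ℤ^n → PushoutI`. -/
def bwdCop : Monoid.Coprod Γ (FreeAb n) →* Monoid.PushoutI (amalgamMap Γ m n) :=
  Monoid.Coprod.lift
    ((Monoid.PushoutI.of (φ := amalgamMap Γ m n) true).comp (MonoidHom.inl Γ (FreeAb m)))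
    ((Monoid.PushoutI.of (φ := amalgamMap Γ m n) false).comp (MonoidHom.inr (FreeAb m) (FreeAb n)))

lemma bwd_comm (a : FreeAb m) (x : Monoid.Coprod Γ (FreeAb n)) :
    Commute (Monoid.PushoutI.base (amalgamMap Γ m n) a) (bwdCop Γ m n x) := by
  induction x using Monoid.Coprod.induction_on with
  | inl g =>
      have h : Monoid.PushoutI.base (amalgamMap Γ m n) a
          = Monoid.PushoutI.of (φ := amalgamMap Γ m n) true
            ((1, a) : Γ × FreeAb m) := by
        rw [← Monoid.PushoutI.of_apply_eq_base (φ := amalgamMap Γ m n) true a]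
        rfl
      rw [h]
      show Commute _ (Monoid.PushoutI.of (φ := amalgamMap Γ m n) true
        ((g, 1) : Γ × FreeAb m))
      unfold Commute SemiconjBy
      erw [← map_mul, ← map_mul]
      congr 1
      show ((1 * g : Γ), (a * 1 : FreeAb m)) = ((g * 1 : Γ), (1 * a : FreeAb m))
      simp
  | inr b =>
      have h : Monoid.PushoutI.base (amalgamMap Γ m n) a
          = Monoid.PushoutI.of (φ := amalgamMap Γ m n) false
            ((a, 1) : FreeAb m × FreeAb n) := by
        rw [← Monoid.PushoutI.of_apply_eq_base (φ := amalgamMap Γ m n) false a]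
        rfl
      rw [h]
      show Commute _ (Monoid.PushoutI.of (φ := amalgamMap Γ m n) false
        ((1, b) : FreeAb m × FreeAb n))
      unfold Commute SemiconjBy
      erw [← map_mul, ← map_mul]
      congr 1
      show ((a * 1 : FreeAb m), (1 * b : FreeAb n)) = ((1 * a : FreeAb m), (b * 1 : FreeAb n))
      simp
  | mul x y hx hy => rw [map_mul]; exact Commute.mul_right hx hy

/-- The backward map. -/
def bwd : FreeAb m × Monoid.Coprod Γ (FreeAb n) →* Monoid.PushoutI (amalgamMap Γ m n) :=
  MonoidHom.noncommCoprod (Monoid.PushoutI.base (amalgamMap Γ m n)) (bwdCop Γ m n)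
    (bwd_comm Γ m n)

lemma bwd_fwd : (bwd Γ m n).comp (fwd Γ m n) = MonoidHom.id _ := by
  apply Monoid.PushoutI.hom_ext
  · rintro (_ | _) <;> ext x
    · -- b = false
      show bwd Γ m n (fwd Γ m n (Monoid.PushoutI.of (φ := amalgamMap Γ m n) false x)) = _
      obtain ⟨a, b⟩ := (x : FreeAb m × FreeAb n)
      erw [fwd, Monoid.PushoutI.lift_of]
      show bwd Γ m n (a, Monoid.Coprod.inr b) = _
      rw [bwd, MonoidHom.noncommCoprod_apply]
      show _ * bwdCop Γ m n (Monoid.Coprod.inr b) = _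
      rw [bwdCop, Monoid.Coprod.lift_apply_inr]
      show _ * Monoid.PushoutI.of (φ := amalgamMap Γ m n) false
        ((1, b) : FreeAb m × FreeAb n) = _
      have h : Monoid.PushoutI.base (amalgamMap Γ m n) a
          = Monoid.PushoutI.of (φ := amalgamMap Γ m n) false
            ((a, 1) : FreeAb m × FreeAb n) := by
        rw [← Monoid.PushoutI.of_apply_eq_base (φ := amalgamMap Γ m n) false a]; rfl
      erw [h, ← map_mul]
      show Monoid.PushoutI.of (φ := amalgamMap Γ m n) false
        ((a * 1 : FreeAb m), (1 * b : FreeAb n)) = _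
      simp
    · -- b = true
      show bwd Γ m n (fwd Γ m n (Monoid.PushoutI.of (φ := amalgamMap Γ m n) true x)) = _
      obtain ⟨g, a⟩ := (x : Γ × FreeAb m)
      erw [fwd, Monoid.PushoutI.lift_of]
      show bwd Γ m n (a, Monoid.Coprod.inl g) = _
      rw [bwd, MonoidHom.noncommCoprod_apply]
      show _ * bwdCop Γ m n (Monoid.Coprod.inl g) = _
      rw [bwdCop, Monoid.Coprod.lift_apply_inl]
      show _ * Monoid.PushoutI.of (φ := amalgamMap Γ m n) true
        ((g, 1) : Γ × FreeAb m) = _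
      have h : Monoid.PushoutI.base (amalgamMap Γ m n) a
          = Monoid.PushoutI.of (φ := amalgamMap Γ m n) true
            ((1, a) : Γ × FreeAb m) := by
        rw [← Monoid.PushoutI.of_apply_eq_base (φ := amalgamMap Γ m n) true a]; rfl
      erw [h, ← map_mul]
      show Monoid.PushoutI.of (φ := amalgamMap Γ m n) true
        ((1 * g : Γ), (a * 1 : FreeAb m)) = _
      simp
  · ext a
    simp [fwd, bwd, fwdK, MonoidHom.noncommCoprod_apply]

lemma fwd_bwdCop : (fwd Γ m n).comp (bwdCop Γ m n)
    = MonoidHom.inr (FreeAb m) (Monoid.Coprod Γ (FreeAb n)) := by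
  refine Monoid.Coprod.hom_ext (MonoidHom.ext fun x => ?_) (MonoidHom.ext fun x => ?_)
  · show fwd Γ m n (Monoid.PushoutI.of (φ := amalgamMap Γ m n) true
      ((x, 1) : Γ × FreeAb m)) = _
    erw [fwd, Monoid.PushoutI.lift_of]
  · show fwd Γ m n (Monoid.PushoutI.of (φ := amalgamMap Γ m n) false
      ((1, x) : FreeAb m × FreeAb n)) = _
    erw [fwd, Monoid.PushoutI.lift_of]

lemma fwd_bwd : (fwd Γ m n).comp (bwd Γ m n) = MonoidHom.id _ := by
  refine MonoidHom.ext fun p => ?_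
  obtain ⟨a, x⟩ := p
  rw [MonoidHom.comp_apply, bwd, MonoidHom.noncommCoprod_apply, map_mul]
  have h1 : fwd Γ m n (Monoid.PushoutI.base (amalgamMap Γ m n) a) = (a, 1) := by
    rw [fwd, Monoid.PushoutI.lift_base]; rfl
  have h2 : fwd Γ m n (bwdCop Γ m n x) = (1, x) := by
    have := congrArg (fun f => f x) (fwd_bwdCop Γ m n)
    simpa using this
  rw [h1, h2]
  show ((a * 1 : FreeAb m), (1 * x : Monoid.Coprod Γ (FreeAb n))) = (a, x)
  rw [mul_one, one_mul]

end AmalgamAux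

/-- The amalgamated free product
`(Γ × ℤ^m) ∗_{ℤ^m} (ℤ^m × ℤ^n)` (the pushout, in the category of groups, of
`a ↦ (1, a)` and `a ↦ (a, 1)`) is isomorphic to `ℤ^m × (Γ ∗ ℤ^n)`. -/
theorem amalgam_iso_prod_coprod (Γ : Type) [Group Γ] (m n : ℕ) (hm : 1 ≤ m) (hn : 1 ≤ n) :
    Nonempty (Monoid.PushoutI (amalgamMap Γ m n) ≃*
      FreeAb m × Monoid.Coprod Γ (FreeAb n)) := by
  exact ⟨MonoidHom.toMulEquiv (AmalgamAux.fwd Γ m n) (AmalgamAux.bwd Γ m n)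
    (AmalgamAux.bwd_fwd Γ m n) (AmalgamAux.fwd_bwd Γ m n)⟩
end
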